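/- Let A be invertible symmetric and G symmetric positive definite with GA = AG. Then B = Aᵀ G⁻¹ A is symmetric positive definite, B commutes with A, and if the PDHG iteration with preconditioner G is written as U_{n+1} = (I - 2τ_uτ_p AᵀG⁻¹A)U_n - τ_u AᵀG⁻½ P̂_n + c (in transformed dual variables P̂ = G½ P), its spectral radius equals max_k f(τ_uτ_p μ_k) where μ_k are the eigenvalues of AᵀG⁻¹A and f(t) = √(1-t) for 0 < t ≤ 1, f(t) = t - 1 + √(t²-t) for t ≥ 1. -/

import Mathlib

open Matrix

/-- The PDHG convergence factor. -/
noncomputable def pdhgRate (t : ℝ) : ℝ :=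
  if t ≤ 1 then Real.sqrt (1 - t) else t - 1 + Real.sqrt (t ^ 2 - t)

section PdhgAux

lemma pdhg_root_abs {t : ℝ} (ht : 0 < t) {z : ℂ}
    (hz : (z - 1) ^ 2 + (t : ℂ) * (2 * z - 1) = 0) : ‖z‖ ≤ pdhgRate t := by
  set u : ℂ := z - (1 - (t : ℂ)) with hu
  have key : u ^ 2 = ((t ^ 2 - t : ℝ) : ℂ) := by
    rw [hu]; push_cast; linear_combination hz
  have him : u.re * u.im + u.im * u.re = 0 := by
    have := congrArg Complex.im key
    simpa [pow_two, Complex.mul_im] using this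
  have hre : u.re * u.re - u.im * u.im = t ^ 2 - t := by
    have := congrArg Complex.re key
    simpa [pow_two, Complex.mul_re] using this
  have hzre : z.re = u.re + (1 - t) := by
    have : z = u + (1 - (t : ℂ)) := by rw [hu]; ring
    rw [this]; simp
  have hzim : z.im = u.im := by
    have : z = u + (1 - (t : ℂ)) := by rw [hu]; ring
    rw [this]; simp
  by_cases hle : t ≤ 1
  · have hc : t ^ 2 - t ≤ 0 := by nlinarith
    have hure : u.re = 0 := by
      rcases mul_eq_zero.mp (by linarith : u.re * u.im = 0) with h | h
      · exact h
      · nlinarith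
    have himsq : u.im * u.im = t - t ^ 2 := by nlinarith
    have habs : ‖z‖ = Real.sqrt (1 - t) := by
      rw [Complex.norm_def, Complex.normSq_apply, hzre, hzim, hure]
      congr 1; nlinarith
    rw [habs, pdhgRate, if_pos hle]
  · push_neg at hle
    have hc : 0 < t ^ 2 - t := by nlinarith
    have huim : u.im = 0 := by
      rcases mul_eq_zero.mp (by linarith : u.re * u.im = 0) with h | h
      · exfalso; nlinarith
      · exact h
    have huresq : u.re * u.re = t ^ 2 - t := by nlinarith
    have habs : ‖z‖ = |u.re + (1 - t)| := by
      rw [Complex.norm_def, Complex.normSq_apply, hzim, huim, hzre]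
      simpa using Real.sqrt_mul_self_eq_abs (u.re + (1 - t))
    have hureabs : |u.re| = Real.sqrt (t ^ 2 - t) := by
      rw [← Real.sqrt_mul_self_eq_abs, huresq]
    rw [habs, pdhgRate, if_neg (not_le.mpr hle)]
    calc |u.re + (1 - t)| ≤ |u.re| + |1 - t| := abs_add_le _ _
      _ = Real.sqrt (t ^ 2 - t) + (t - 1) := by rw [hureabs, abs_of_nonpos (by linarith)]; ring
      _ = t - 1 + Real.sqrt (t ^ 2 - t) := by ring

lemma pdhg_exists_root {t : ℝ} (ht : 0 < t) :
    ∃ z : ℂ, (z - 1) ^ 2 + (t : ℂ) * (2 * z - 1) = 0 ∧ ‖z‖ = pdhgRate t := by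
  by_cases hle : t ≤ 1
  · set a : ℝ := Real.sqrt (t - t ^ 2) with ha
    have ha2 : a ^ 2 = t - t ^ 2 := Real.sq_sqrt (by nlinarith)
    have haC : (a : ℂ) ^ 2 = ((t : ℂ)) - (t : ℂ) ^ 2 := by
      have := congrArg (Complex.ofReal) ha2; push_cast at this; exact this
    refine ⟨((1 - t : ℝ) : ℂ) + (a : ℂ) * Complex.I, ?_, ?_⟩
    · push_cast
      linear_combination (a : ℂ) ^ 2 * Complex.I_sq - haC
    · rw [pdhgRate, if_pos hle, Complex.norm_def, Complex.normSq_apply]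
      simp only [Complex.add_re, Complex.ofReal_re, Complex.mul_re, Complex.I_re,
        Complex.ofReal_im, Complex.I_im, Complex.add_im, Complex.mul_im]
      have : a * a = t - t ^ 2 := by nlinarith
      congr 1; nlinarith
  · push_neg at hle
    set b : ℝ := Real.sqrt (t ^ 2 - t) with hb
    have hb2 : b ^ 2 = t ^ 2 - t := Real.sq_sqrt (by nlinarith)
    have hbnn : 0 ≤ b := Real.sqrt_nonneg _
    refine ⟨((1 - t - b : ℝ) : ℂ), ?_, ?_⟩
    · have hbC : (b : ℂ) ^ 2 = (t : ℂ) ^ 2 - (t : ℂ) := by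
        have := congrArg (Complex.ofReal) hb2; push_cast at this; exact this
      push_cast
      linear_combination hbC
    · rw [Complex.norm_real, Real.norm_eq_abs, pdhgRate, if_neg (not_le.mpr hle), abs_of_nonpos (by nlinarith)]
      ring

lemma pdhg_smul_one_add_smul_diagonal {n : Type*} [Fintype n] [DecidableEq n] {α : Type*}
    [CommRing α] (c₁ c₂ : α) (f : n → α) :
    c₁ • (1 : Matrix n n α) + c₂ • diagonal f = diagonal (fun i => c₁ + c₂ * f i) := by
  ext i j
  by_cases h : i = j
  · subst h; simp
  · simp [Matrix.one_apply_ne h, Matrix.diagonal_apply_ne _ h]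

lemma pdhg_det_smul_one_add_smul_real {N : ℕ} (B : Matrix (Fin N) (Fin N) ℝ)
    (hB : B.IsHermitian) (c₁ c₂ : ℝ) :
    (c₁ • 1 + c₂ • B).det = ∏ i, (c₁ + c₂ * hB.eigenvalues i) := by
  set V : Matrix (Fin N) (Fin N) ℝ := (hB.eigenvectorUnitary : Matrix (Fin N) (Fin N) ℝ) with hV
  have hVsV : V * star V = 1 := Matrix.mem_unitaryGroup_iff.mp hB.eigenvectorUnitary.2
  have hsVV : star V * V = 1 := Matrix.mem_unitaryGroup_iff'.mp hB.eigenvectorUnitary.2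
  have hBspec : B = V * diagonal hB.eigenvalues * star V := by
    have := hB.spectral_theorem
    simpa [Function.comp] using this
  have key : c₁ • 1 + c₂ • B = V * (diagonal fun i => c₁ + c₂ * hB.eigenvalues i) * star V :=
    calc c₁ • 1 + c₂ • B
        = c₁ • (V * 1 * star V) + c₂ • (V * diagonal hB.eigenvalues * star V) := by
          rw [← hBspec, Matrix.mul_one, hVsV]
      _ = V * (c₁ • 1 + c₂ • diagonal hB.eigenvalues) * star V := by
          simp [Matrix.mul_add, Matrix.add_mul, Matrix.mul_smul, Matrix.smul_mul]
      _ = V * (diagonal fun i => c₁ + c₂ * hB.eigenvalues i) * star V := by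
          rw [pdhg_smul_one_add_smul_diagonal]
  rw [key, det_mul, det_mul, mul_comm, ← mul_assoc, ← det_mul, hsVV, det_one, one_mul,
    det_diagonal]

lemma pdhg_det_smul_one_add_smul_complex {N : ℕ} (B : Matrix (Fin N) (Fin N) ℝ)
    (hB : B.IsHermitian) (c₁ c₂ : ℂ) :
    (c₁ • 1 + c₂ • B.map Complex.ofReal).det = ∏ i, (c₁ + c₂ * (hB.eigenvalues i : ℂ)) := by
  set V : Matrix (Fin N) (Fin N) ℝ := (hB.eigenvectorUnitary : Matrix (Fin N) (Fin N) ℝ) with hV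
  have hVsV : V * star V = 1 := Matrix.mem_unitaryGroup_iff.mp hB.eigenvectorUnitary.2
  have hsVV : star V * V = 1 := Matrix.mem_unitaryGroup_iff'.mp hB.eigenvectorUnitary.2
  have hBspec : B = V * diagonal hB.eigenvalues * star V := by
    have := hB.spectral_theorem
    simpa [Function.comp] using this
  set Vc : Matrix (Fin N) (Fin N) ℂ := V.map Complex.ofReal with hVc
  set Wc : Matrix (Fin N) (Fin N) ℂ := (star V : Matrix (Fin N) (Fin N) ℝ).map Complex.ofReal
    with hWc
  have hmap : ∀ (P Q : Matrix (Fin N) (Fin N) ℝ),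
      (P * Q).map Complex.ofReal = P.map Complex.ofReal * Q.map Complex.ofReal := fun P Q =>
    Matrix.map_mul (f := Complex.ofRealHom)
  have hVW : Vc * Wc = 1 := by
    rw [hVc, hWc, ← hmap, hVsV]
    simp
  have hWV : Wc * Vc = 1 := by
    rw [hVc, hWc, ← hmap, hsVV]
    simp
  have hBc : B.map Complex.ofReal = Vc * (diagonal fun i => (hB.eigenvalues i : ℂ)) * Wc := by
    conv_lhs => rw [hBspec]
    rw [hmap, hmap]
    congr 1
    rw [Matrix.diagonal_map (by simp)]
  have key : c₁ • 1 + c₂ • B.map Complex.ofReal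
      = Vc * (diagonal fun i => c₁ + c₂ * (hB.eigenvalues i : ℂ)) * Wc :=
    calc c₁ • 1 + c₂ • B.map Complex.ofReal
        = c₁ • (Vc * 1 * Wc) + c₂ • (Vc * (diagonal fun i => (hB.eigenvalues i : ℂ)) * Wc) := by
          rw [← hBc, Matrix.mul_one, hVW]
      _ = Vc * (c₁ • 1 + c₂ • (diagonal fun i => (hB.eigenvalues i : ℂ))) * Wc := by
          simp [Matrix.mul_add, Matrix.add_mul, Matrix.mul_smul, Matrix.smul_mul]
      _ = Vc * (diagonal fun i => c₁ + c₂ * (hB.eigenvalues i : ℂ)) * Wc := by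
          rw [pdhg_smul_one_add_smul_diagonal]
  rw [key, det_mul, det_mul, mul_comm, ← mul_assoc, ← det_mul, hWV, det_one, one_mul,
    det_diagonal]

end PdhgAux


/-- For invertible symmetric `A` and symmetric positive definite `G` commuting with
`A` (with positive definite square root `H`, `H² = G`): `B = Aᵀ G⁻¹ A` is symmetric
positive definite, commutes with `A`, and the spectral radius of the transformed
G-prox PDHG iteration matrix
`M = [[I - 2τ_uτ_p B, -τ_u Aᵀ H⁻¹], [τ_p H⁻¹ A, I]]`
equals `max_k f(τ_uτ_p μ_k)` over the eigenvalues `μ_k` of `B`. -/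
theorem stmt_12 {N : ℕ} (hN : 0 < N) (A G H : Matrix (Fin N) (Fin N) ℝ)
    (hA : A.IsSymm) (hAdet : IsUnit A.det) (hG : G.PosDef) (hcomm : G * A = A * G)
    (hH : H.PosDef) (hHG : H * H = G) (τu τp : ℝ) (hu : 0 < τu) (hp : 0 < τp) :
    (Aᵀ * G⁻¹ * A).PosDef ∧
    (Aᵀ * G⁻¹ * A) * A = A * (Aᵀ * G⁻¹ * A) ∧
    ∃ r : ℝ,
      IsGreatest
        ((fun z : ℂ => ‖z‖) ''
          spectrum ℂ
            ((Matrix.fromBlocks (1 - (2 * τu * τp) • (Aᵀ * G⁻¹ * A))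
                ((-τu) • (Aᵀ * H⁻¹)) (τp • (H⁻¹ * A)) 1).map Complex.ofReal)) r ∧
      IsGreatest ((fun μ => pdhgRate (τu * τp * μ)) '' spectrum ℝ (Aᵀ * G⁻¹ * A)) r := by
  have hAU : IsUnit A := (Matrix.isUnit_iff_isUnit_det A).mpr hAdet
  have hAH : Aᴴ = Aᵀ := by ext i j; simp [conjTranspose_apply]
  have hGinv : G⁻¹.PosDef := hG.inv
  have hGdet : IsUnit G.det := isUnit_iff_ne_zero.mpr hG.det_pos.ne'
  -- B is positive definite
  have hBpd : (Aᵀ * G⁻¹ * A).PosDef := by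
    rw [Matrix.posDef_iff_dotProduct_mulVec]
    constructor
    · rw [← hAH]
      exact Matrix.isHermitian_conjTranspose_mul_mul A hGinv.1
    · intro x hx
      have hAx : A *ᵥ x ≠ 0 := by
        intro h
        apply hx
        have hinj : Function.Injective A.mulVec := Matrix.mulVec_injective_iff_isUnit.mpr hAU
        exact hinj (by simpa using h)
      have hrw : star x ⬝ᵥ ((Aᵀ * G⁻¹ * A) *ᵥ x)
          = star (A *ᵥ x) ⬝ᵥ (G⁻¹ *ᵥ (A *ᵥ x)) := by
        rw [show (Aᵀ * G⁻¹ * A) *ᵥ x = Aᵀ *ᵥ (G⁻¹ *ᵥ (A *ᵥ x)) by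
          rw [← Matrix.mulVec_mulVec, ← Matrix.mulVec_mulVec]]
        rw [show (star x : Fin N → ℝ) = x from funext fun i => star_trivial _,
          show (star (A *ᵥ x) : Fin N → ℝ) = A *ᵥ x from funext fun i => star_trivial _]
        rw [Matrix.dotProduct_mulVec x Aᵀ, Matrix.vecMul_transpose]
      rw [hrw]
      exact hGinv.dotProduct_mulVec_pos hAx
  -- commuting
  have hGinvA : G⁻¹ * A = A * G⁻¹ := by
    calc G⁻¹ * A = G⁻¹ * A * (G * G⁻¹) := by rw [Matrix.mul_nonsing_inv _ hGdet, Matrix.mul_one]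
      _ = G⁻¹ * (A * G) * G⁻¹ := by simp only [Matrix.mul_assoc]
      _ = G⁻¹ * (G * A) * G⁻¹ := by rw [hcomm]
      _ = (G⁻¹ * G) * (A * G⁻¹) := by simp only [Matrix.mul_assoc]
      _ = A * G⁻¹ := by rw [Matrix.nonsing_inv_mul _ hGdet, Matrix.one_mul]
  have hBA : (Aᵀ * G⁻¹ * A) * A = A * (Aᵀ * G⁻¹ * A) := by
    rw [hA]
    calc A * G⁻¹ * A * A = A * ((G⁻¹ * A) * A) := by simp only [Matrix.mul_assoc]
      _ = A * ((A * G⁻¹) * A) := by rw [hGinvA]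
      _ = A * (A * G⁻¹ * A) := rfl
  have hPQ : (Aᵀ * H⁻¹) * (H⁻¹ * A) = Aᵀ * G⁻¹ * A := by
    rw [← hHG, Matrix.mul_inv_rev]
    simp only [Matrix.mul_assoc]
  -- setup
  have hBH : (Aᵀ * G⁻¹ * A).IsHermitian := hBpd.1
  set B : Matrix (Fin N) (Fin N) ℝ := Aᵀ * G⁻¹ * A with hBdef
  set μ : Fin N → ℝ := hBH.eigenvalues with hμdef
  have hμpos : ∀ i, 0 < μ i := fun i => hBpd.eigenvalues_pos i
  set P : Matrix (Fin N) (Fin N) ℝ := Aᵀ * H⁻¹ with hPdef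
  set Q : Matrix (Fin N) (Fin N) ℝ := H⁻¹ * A with hQdef
  set Bc : Matrix (Fin N) (Fin N) ℂ := B.map Complex.ofReal with hBcdef
  set Pc : Matrix (Fin N) (Fin N) ℂ := P.map Complex.ofReal with hPcdef
  set Qc : Matrix (Fin N) (Fin N) ℂ := Q.map Complex.ofReal with hQcdef
  have hmap : ∀ (X Y : Matrix (Fin N) (Fin N) ℝ),
      (X * Y).map Complex.ofReal = X.map Complex.ofReal * Y.map Complex.ofReal := fun X Y =>
    Matrix.map_mul (f := Complex.ofRealHom)
  have hrsmul : ∀ (r : ℝ) (X : Matrix (Fin N) (Fin N) ℝ),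
      (r • X).map Complex.ofReal = (r : ℂ) • X.map Complex.ofReal := by
    intro r X
    ext i j
    simp [Complex.real_smul]
  have hPcQc : Pc * Qc = Bc := by rw [← hmap, hPQ]
  have hXc : ((1 - (2 * τu * τp) • B).map Complex.ofReal)
      = (1 : Matrix (Fin N) (Fin N) ℂ) - ((2 * τu * τp : ℝ) : ℂ) • Bc := by
    rw [Matrix.map_sub Complex.ofReal (fun a b => by push_cast; ring), hrsmul]
    rw [show ((1 : Matrix (Fin N) (Fin N) ℝ).map Complex.ofReal)
        = (1 : Matrix (Fin N) (Fin N) ℂ) by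
      ext i j; by_cases h : i = j <;> simp [h, Matrix.one_apply]]
  set Mc0 : Matrix (Fin N ⊕ Fin N) (Fin N ⊕ Fin N) ℂ :=
    Matrix.fromBlocks ((1 : Matrix (Fin N) (Fin N) ℂ) - ((2 * τu * τp : ℝ) : ℂ) • Bc)
      (((-τu : ℝ) : ℂ) • Pc) (((τp : ℝ) : ℂ) • Qc) 1 with hMc0
  have hMc : ((Matrix.fromBlocks (1 - (2 * τu * τp) • B)
      ((-τu) • (Aᵀ * H⁻¹)) (τp • (H⁻¹ * A)) 1).map Complex.ofReal) = Mc0 := by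
    rw [Matrix.fromBlocks_map, hXc, hrsmul, hrsmul, hMc0]
    congr 1
    ext i j; by_cases h : i = j <;> simp [h, Matrix.one_apply]
  -- key determinant identity for z ≠ 1, via Schur complement
  have key : ∀ z : ℂ, z ≠ 1 →
      (z • (1 : Matrix (Fin N ⊕ Fin N) (Fin N ⊕ Fin N) ℂ) - Mc0).det
      = ∏ i, ((z - 1) ^ 2 + ((τu * τp * μ i : ℝ) : ℂ) * (2 * z - 1)) := by
    intro z hz
    have hz1 : z - 1 ≠ 0 := sub_ne_zero.mpr hz
    have hblock : z • (1 : Matrix (Fin N ⊕ Fin N) (Fin N ⊕ Fin N) ℂ) - Mc0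
        = Matrix.fromBlocks
            ((z - 1) • 1 + ((2 * τu * τp : ℝ) : ℂ) • Bc)
            (((τu : ℝ) : ℂ) • Pc) (((-τp : ℝ) : ℂ) • Qc) ((z - 1) • 1) := by
      rw [hMc0, ← Matrix.fromBlocks_one (l := Fin N) (m := Fin N) (α := ℂ),
        Matrix.fromBlocks_smul, sub_eq_add_neg, Matrix.fromBlocks_neg, Matrix.fromBlocks_add,
        Matrix.fromBlocks_inj]
      refine ⟨?_, ?_, ?_, ?_⟩
      · rw [sub_smul, one_smul]; abel
      · rw [smul_zero, zero_add]; push_cast; rw [neg_smul, neg_neg]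
      · rw [smul_zero, zero_add]; push_cast; rw [neg_smul]
      · rw [sub_smul, one_smul, sub_eq_add_neg]
    rw [hblock]
    letI : Invertible ((z - 1) • (1 : Matrix (Fin N) (Fin N) ℂ)) :=
      ⟨(z - 1)⁻¹ • 1, by
          rw [Matrix.smul_mul, Matrix.mul_smul, smul_smul, inv_mul_cancel₀ hz1, Matrix.one_mul,
            one_smul], by
          rw [Matrix.smul_mul, Matrix.mul_smul, smul_smul, mul_inv_cancel₀ hz1, Matrix.one_mul,
            one_smul]⟩
    rw [Matrix.det_fromBlocks₂₂]
    have hinvOf : ⅟((z - 1) • (1 : Matrix (Fin N) (Fin N) ℂ)) = (z - 1)⁻¹ • 1 := rfl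
    rw [hinvOf]
    have hmid : (((τu : ℝ) : ℂ) • Pc) * ((z - 1)⁻¹ • (1 : Matrix (Fin N) (Fin N) ℂ))
        * ((((-τp : ℝ) : ℂ)) • Qc)
        = ((τu : ℂ) * (z - 1)⁻¹ * ((-τp : ℝ) : ℂ)) • Bc := by
      simp only [Matrix.smul_mul, Matrix.mul_smul, Matrix.mul_one, smul_smul]
      rw [hPcQc]
      congr 1
      ring
    rw [hmid]
    have hinner : ((z - 1) • (1 : Matrix (Fin N) (Fin N) ℂ) + ((2 * τu * τp : ℝ) : ℂ) • Bc)
        - ((τu : ℂ) * (z - 1)⁻¹ * ((-τp : ℝ) : ℂ)) • Bc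
        = (z - 1) • (1 : Matrix (Fin N) (Fin N) ℂ)
          + (((2 * τu * τp : ℝ) : ℂ) + ((τu * τp : ℝ) : ℂ) * (z - 1)⁻¹) • Bc := by
      rw [add_sub_assoc, ← sub_smul]
      congr 2
      push_cast
      ring
    rw [hinner, pdhg_det_smul_one_add_smul_complex B hBH,
      Matrix.det_smul, Matrix.det_one, mul_one, Fintype.card_fin,
      show ((z - 1) ^ N : ℂ) = ∏ _i : Fin N, (z - 1) by
        rw [Finset.prod_const, Finset.card_univ, Fintype.card_fin],
      ← Finset.prod_mul_distrib]
    refine Finset.prod_congr rfl fun i _ => ?_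
    have h1 : (z - 1) * (z - 1)⁻¹ = 1 := mul_inv_cancel₀ hz1
    push_cast
    linear_combination (↑τu * ↑τp * (μ i : ℂ)) * h1
  -- extend to all z by continuity
  have hf : Continuous fun z : ℂ =>
      (z • (1 : Matrix (Fin N ⊕ Fin N) (Fin N ⊕ Fin N) ℂ) - Mc0).det :=
    Continuous.matrix_det ((continuous_id.smul continuous_const).sub continuous_const)
  have hg : Continuous fun z : ℂ =>
      ∏ i, ((z - 1) ^ 2 + ((τu * τp * μ i : ℝ) : ℂ) * (2 * z - 1)) := by
    apply continuous_finset_prod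
    intro i _
    fun_prop
  have heqfull : (fun z : ℂ =>
        (z • (1 : Matrix (Fin N ⊕ Fin N) (Fin N ⊕ Fin N) ℂ) - Mc0).det)
      = fun z => ∏ i, ((z - 1) ^ 2 + ((τu * τp * μ i : ℝ) : ℂ) * (2 * z - 1)) :=
    Continuous.ext_on (dense_compl_singleton (1 : ℂ)) hf hg fun z hz => key z hz
  -- spectrum characterizations
  have hspecC : ∀ z : ℂ, z ∈ spectrum ℂ Mc0 ↔
      ∃ i, (z - 1) ^ 2 + ((τu * τp * μ i : ℝ) : ℂ) * (2 * z - 1) = 0 := by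
    intro z
    rw [spectrum.mem_iff, Algebra.algebraMap_eq_smul_one, Matrix.isUnit_iff_isUnit_det,
      isUnit_iff_ne_zero, not_ne_iff, congrFun heqfull z, Finset.prod_eq_zero_iff]
    constructor
    · rintro ⟨i, -, hi⟩; exact ⟨i, hi⟩
    · rintro ⟨i, hi⟩; exact ⟨i, Finset.mem_univ i, hi⟩
  have hdetR : ∀ x : ℝ, (x • (1 : Matrix (Fin N) (Fin N) ℝ) - B).det = ∏ i, (x - μ i) := by
    intro x
    rw [show x • (1 : Matrix (Fin N) (Fin N) ℝ) - B = x • 1 + (-1 : ℝ) • B by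
      rw [neg_one_smul]; abel]
    rw [pdhg_det_smul_one_add_smul_real B hBH]
    exact Finset.prod_congr rfl fun i _ => by ring
  have hspecR : ∀ x : ℝ, x ∈ spectrum ℝ B ↔ ∃ i, x = μ i := by
    intro x
    rw [spectrum.mem_iff, Algebra.algebraMap_eq_smul_one, Matrix.isUnit_iff_isUnit_det,
      isUnit_iff_ne_zero, not_ne_iff, hdetR, Finset.prod_eq_zero_iff]
    constructor
    · rintro ⟨i, -, hi⟩; exact ⟨i, by linarith [sub_eq_zero.mp hi]⟩
    · rintro ⟨i, rfl⟩; exact ⟨i, Finset.mem_univ i, sub_self _⟩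
  -- the spectral radius
  haveI : Nonempty (Fin N) := Fin.pos_iff_nonempty.mp hN
  have hne : (Finset.univ : Finset (Fin N)).Nonempty := Finset.univ_nonempty
  set r : ℝ := Finset.univ.sup' hne (fun i => pdhgRate (τu * τp * μ i)) with hrdef
  obtain ⟨i₀, -, hi₀⟩ := Finset.exists_mem_eq_sup' hne (fun i => pdhgRate (τu * τp * μ i))
  refine ⟨hBpd, hBA, r, ⟨?_, ?_⟩, ⟨?_, ?_⟩⟩
  · -- r is attained in the complex spectrum
    obtain ⟨z, hzroot, hzabs⟩ := pdhg_exists_root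
      (t := τu * τp * μ i₀) (mul_pos (mul_pos hu hp) (hμpos i₀))
    refine ⟨z, ?_, by show ‖z‖ = r; rw [hzabs, hrdef]; exact hi₀.symm⟩
    rw [hMc]
    exact (hspecC z).mpr ⟨i₀, by exact_mod_cast hzroot⟩
  · -- r is an upper bound on the complex spectrum
    rintro x ⟨z, hz, rfl⟩
    rw [hMc] at hz
    obtain ⟨i, hi⟩ := (hspecC z).mp hz
    calc ‖z‖ ≤ pdhgRate (τu * τp * μ i) :=
          pdhg_root_abs (mul_pos (mul_pos hu hp) (hμpos i)) (by exact_mod_cast hi)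
      _ ≤ r := by rw [hrdef]; exact Finset.le_sup' (fun j => pdhgRate (τu * τp * μ j)) (Finset.mem_univ i)
  · -- r is attained on the real spectrum of B
    exact ⟨μ i₀, (hspecR (μ i₀)).mpr ⟨i₀, rfl⟩, by
      show pdhgRate (τu * τp * μ i₀) = r
      rw [hrdef]; exact hi₀.symm⟩
  · -- r is an upper bound
    rintro x ⟨m, hm, rfl⟩
    obtain ⟨i, rfl⟩ := (hspecR m).mp hm
    show pdhgRate (τu * τp * μ i) ≤ r
    rw [hrdef]
    exact Finset.le_sup' (fun i => pdhgRate (τu * τp * μ i)) (Finset.mem_univ i)
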